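/- Let P be a nonzero real 3×3 skew-symmetric matrix and a, b ∈ ℝ³ vectors with P b = 0 and b ≠ 0. Then g(a) b = 0 if and only if P a = 0. (If dS ≠ 0 at a regular point, then gdS = 0 if and only if PdH = 0.) -/

import Mathlib

open Matrix RealInnerProductSpace

/-- Transitivity of parallelism through a nonzero vector, in coordinates. -/
lemma cross_trans (u0 u1 u2 v0 v1 v2 t0 t1 t2 : ℝ)
    (hu : u0 ≠ 0 ∨ u1 ≠ 0 ∨ u2 ≠ 0)
    (p1 : u1*v2 - u2*v1 = 0) (p2 : u2*v0 - u0*v2 = 0) (p3 : u0*v1 - u1*v0 = 0)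
    (q1 : u1*t2 - u2*t1 = 0) (q2 : u2*t0 - u0*t2 = 0) (q3 : u0*t1 - u1*t0 = 0) :
    (v1*t2 - v2*t1 = 0) ∧ (v2*t0 - v0*t2 = 0) ∧ (v0*t1 - v1*t0 = 0) := by
  have hW : u0^2 + u1^2 + u2^2 ≠ 0 := by
    rcases hu with h|h|h <;> positivity
  refine ⟨?_, ?_, ?_⟩
  · have h : (u0^2+u1^2+u2^2) * (v1*t2 - v2*t1) = 0 := by
      linear_combination (u0*v0+u1*v1+u2*v2)*q1 + (t1*u0)*p2 - (t1*u1)*p1 + (t2*u0)*p3 - (t2*u2)*p1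
    exact (mul_eq_zero.mp h).resolve_left hW
  · have h : (u0^2+u1^2+u2^2) * (v2*t0 - v0*t2) = 0 := by
      linear_combination (u0*v0+u1*v1+u2*v2)*q2 + (t2*u1)*p3 - (t2*u2)*p2 + (t0*u1)*p1 - (t0*u0)*p2
    exact (mul_eq_zero.mp h).resolve_left hW
  · have h : (u0^2+u1^2+u2^2) * (v0*t1 - v1*t0) = 0 := by
      linear_combination (u0*v0+u1*v1+u2*v2)*q3 + (t0*u2)*p1 - (t0*u0)*p3 + (t1*u2)*p2 - (t1*u1)*p3
    exact (mul_eq_zero.mp h).resolve_left hW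

/-- Extensionality for vectors indexed by `Fin 3`. -/
lemma vec3_ext {f : Fin 3 → ℝ} (h0 : f 0 = 0) (h1 : f 1 = 0) (h2 : f 2 = 0) : f = 0 := by
  funext i
  fin_cases i
  exacts [h0, h1, h2]

/-- The dissipative tensor `g(a) = a ⊗ a − ‖a‖² I` of the paper, as a 3×3 matrix;
it acts by `g(a) v = ⟨a, v⟩ a − ‖a‖² v`. -/
noncomputable def gmat (a : EuclideanSpace ℝ (Fin 3)) : Matrix (Fin 3) (Fin 3) ℝ :=
  Matrix.vecMulVec a a - (‖a‖ ^ 2) • 1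

set_option maxHeartbeats 1000000 in
/-- If `dS ≠ 0` at a regular point, then `g dS = 0` iff `P dH = 0`. -/
theorem dissipative_zero_iff_hamiltonian_zero (P : Matrix (Fin 3) (Fin 3) ℝ) (hP : Pᵀ = -P)
    (hP0 : P ≠ 0) (a b : EuclideanSpace ℝ (Fin 3)) (hb : P *ᵥ b = 0) (hb0 : b ≠ 0) :
    gmat a *ᵥ b = 0 ↔ P *ᵥ a = 0 := by
  -- skew-symmetry facts
  have hskew : ∀ i j, P j i = -P i j := by
    intro i j
    have := congrFun (congrFun hP i) j
    simpa [Matrix.transpose_apply] using this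
  have hd0 : P 0 0 = 0 := by have := hskew 0 0; linarith
  have hd1 : P 1 1 = 0 := by have := hskew 1 1; linarith
  have hd2 : P 2 2 = 0 := by have := hskew 2 2; linarith
  have s01 : P 0 1 = -P 1 0 := hskew 1 0
  have s12 : P 1 2 = -P 2 1 := hskew 2 1
  have s20 : P 2 0 = -P 0 2 := hskew 0 2
  -- P *ᵥ v = 0 iff cross product of u = (P 2 1, P 0 2, P 1 0) with v vanishes
  have hmv : ∀ v : EuclideanSpace ℝ (Fin 3), P *ᵥ v = 0 ↔
      (P 0 2 * v 2 - P 1 0 * v 1 = 0 ∧ P 1 0 * v 0 - P 2 1 * v 2 = 0 ∧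
        P 2 1 * v 1 - P 0 2 * v 0 = 0) := by
    intro v
    constructor
    · intro h
      have h0 := congrFun h 0
      have h1 := congrFun h 1
      have h2 := congrFun h 2
      simp [Matrix.mulVec, dotProduct, Fin.sum_univ_three] at h0 h1 h2
      refine ⟨?_, ?_, ?_⟩
      · linear_combination h0 - v 0 * hd0 - v 1 * s01
      · linear_combination h1 - v 1 * hd1 - v 2 * s12
      · linear_combination h2 - v 2 * hd2 - v 0 * s20
    · intro ⟨h1, h2, h3⟩
      apply vec3_ext <;>
        simp only [Matrix.mulVec, dotProduct, Fin.sum_univ_three]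
      · linear_combination h1 + v 0 * hd0 + v 1 * s01
      · linear_combination h2 + v 1 * hd1 + v 2 * s12
      · linear_combination h3 + v 2 * hd2 + v 0 * s20
  -- the axis is nonzero
  have hu : P 2 1 ≠ 0 ∨ P 0 2 ≠ 0 ∨ P 1 0 ≠ 0 := by
    by_contra h
    push_neg at h
    obtain ⟨e0, e1, e2⟩ := h
    apply hP0
    ext i j
    fin_cases i <;> fin_cases j <;>
      simp [hd0, hd1, hd2, e0, e1, e2, s01, s12, s20]
  -- b is a nonzero vector with u × b = 0
  obtain ⟨e1, e2, e3⟩ := (hmv b).mp hb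
  have hbne : b 0 ≠ 0 ∨ b 1 ≠ 0 ∨ b 2 ≠ 0 := by
    by_contra h
    push_neg at h
    exact hb0 (by ext i; simpa using congrFun (vec3_ext h.1 h.2.1 h.2.2) i)
  -- norm squared of a
  have hn : ‖a‖ ^ 2 = a 0 ^ 2 + a 1 ^ 2 + a 2 ^ 2 := by
    rw [EuclideanSpace.norm_eq, Real.sq_sqrt (by positivity)]
    simp [Fin.sum_univ_three, sq_abs]
  -- gmat a *ᵥ b = 0 iff the three "T" equations
  have hgm : gmat a *ᵥ b = 0 ↔
      ((a 0 * b 0 + a 1 * b 1 + a 2 * b 2) * a 0 - (a 0 ^ 2 + a 1 ^ 2 + a 2 ^ 2) * b 0 = 0 ∧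
       (a 0 * b 0 + a 1 * b 1 + a 2 * b 2) * a 1 - (a 0 ^ 2 + a 1 ^ 2 + a 2 ^ 2) * b 1 = 0 ∧
       (a 0 * b 0 + a 1 * b 1 + a 2 * b 2) * a 2 - (a 0 ^ 2 + a 1 ^ 2 + a 2 ^ 2) * b 2 = 0) := by
    constructor
    · intro h
      have h0 := congrFun h 0
      have h1 := congrFun h 1
      have h2 := congrFun h 2
      simp [gmat, Matrix.mulVec, dotProduct, Fin.sum_univ_three, Matrix.vecMulVec,
        Matrix.one_apply, hn] at h0 h1 h2
      refine ⟨by linarith, by linarith, by linarith⟩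
    · intro ⟨h0, h1, h2⟩
      apply vec3_ext <;>
        simp [gmat, Matrix.mulVec, dotProduct, Fin.sum_univ_three, Matrix.vecMulVec,
          Matrix.one_apply, hn] <;> linarith
  rw [hgm, hmv a]
  constructor
  · rintro ⟨T0, T1, T2⟩
    by_cases ha : a 0 = 0 ∧ a 1 = 0 ∧ a 2 = 0
    · exact ⟨by linear_combination P 0 2 * ha.2.2 - P 1 0 * ha.2.1,
        by linear_combination P 1 0 * ha.1 - P 2 1 * ha.2.2,
        by linear_combination P 2 1 * ha.2.1 - P 0 2 * ha.1⟩
    · have hna : a 0 ^ 2 + a 1 ^ 2 + a 2 ^ 2 ≠ 0 := by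
        intro h
        have h0 : a 0 ^ 2 = 0 := by
          linarith [sq_nonneg (a 0), sq_nonneg (a 1), sq_nonneg (a 2)]
        have h1 : a 1 ^ 2 = 0 := by
          linarith [sq_nonneg (a 0), sq_nonneg (a 1), sq_nonneg (a 2)]
        have h2 : a 2 ^ 2 = 0 := by
          linarith [sq_nonneg (a 0), sq_nonneg (a 1), sq_nonneg (a 2)]
        exact ha ⟨pow_eq_zero_iff two_ne_zero |>.mp h0,
          pow_eq_zero_iff two_ne_zero |>.mp h1, pow_eq_zero_iff two_ne_zero |>.mp h2⟩
      -- derive a × b = 0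
      have Z1 : a 1 * b 2 - a 2 * b 1 = 0 := by
        have h : (a 0 ^ 2 + a 1 ^ 2 + a 2 ^ 2) * (a 1 * b 2 - a 2 * b 1) = 0 := by
          linear_combination (a 2) * T1 - (a 1) * T2
        exact (mul_eq_zero.mp h).resolve_left hna
      have Z2 : a 2 * b 0 - a 0 * b 2 = 0 := by
        have h : (a 0 ^ 2 + a 1 ^ 2 + a 2 ^ 2) * (a 2 * b 0 - a 0 * b 2) = 0 := by
          linear_combination (a 0) * T2 - (a 2) * T0
        exact (mul_eq_zero.mp h).resolve_left hna
      have Z3 : a 0 * b 1 - a 1 * b 0 = 0 := by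
        have h : (a 0 ^ 2 + a 1 ^ 2 + a 2 ^ 2) * (a 0 * b 1 - a 1 * b 0) = 0 := by
          linear_combination (a 1) * T0 - (a 0) * T1
        exact (mul_eq_zero.mp h).resolve_left hna
      -- transitivity through b: b × a = 0 and b × u = 0 give a × u = 0
      obtain ⟨c1, c2, c3⟩ := cross_trans (b 0) (b 1) (b 2) (a 0) (a 1) (a 2)
        (P 2 1) (P 0 2) (P 1 0) hbne
        (by linear_combination -Z1) (by linear_combination -Z2) (by linear_combination -Z3)
        (by linear_combination -e1) (by linear_combination -e2) (by linear_combination -e3)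
      exact ⟨by linear_combination -c1, by linear_combination -c2, by linear_combination -c3⟩
  · rintro ⟨f1, f2, f3⟩
    obtain ⟨Z1, Z2, Z3⟩ := cross_trans (P 2 1) (P 0 2) (P 1 0) (a 0) (a 1) (a 2)
      (b 0) (b 1) (b 2) hu f1 f2 f3 e1 e2 e3
    refine ⟨?_, ?_, ?_⟩
    · linear_combination (a 1) * Z3 - (a 2) * Z2
    · linear_combination (a 2) * Z1 - (a 0) * Z3
    · linear_combination (a 0) * Z2 - (a 1) * Z1
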